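/- arXiv:1108.4869 — 2 statements merged into one kernel-verified Lean document; each statement's English description precedes it below -/
import Mathlib

section
/- Let p > q > 0 be coprime integers with p/q = [c_1, …, c_n]^+, where the c_i are integers with c_1 ≥ 1, c_i ≥ 1 for 1 < i < n, and c_n ≥ 2 if n ≥ 2. Let D be the finite sequence of integers obtained by concatenating blocks B_1, …, B_n, where for odd i with i < n the block B_i consists of c_i − 1 copies of 2, for even i with i < n the block B_i = (c_i + 2), and the final block B_n = (c_n + 1) if n is even, while B_n consists of c_n − 1 copies of 2 if n is odd. Then D is nonempty and p/(p−q) = [D]^-. -/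
/-- Positive continued fraction `[c₁, …, cₙ]⁺ = c₁ + 1/[c₂, …, cₙ]⁺` of a
finite sequence of rationals (junk value `0` on the empty list). -/
def posCF : List ℚ → ℚ
  | [] => 0
  | [c] => c
  | c :: d :: t => c + 1 / posCF (d :: t)

/-- Negative continued fraction `[c₁, …, cₙ]⁻ = c₁ - 1/[c₂, …, cₙ]⁻` of a
finite sequence of rationals (junk value `0` on the empty list). -/
def negCF : List ℚ → ℚ
  | [] => 0
  | [c] => c
  | c :: d :: t => c - 1 / negCF (d :: t)

lemma posCF_cons (c : ℚ) (t : List ℚ) : posCF (c :: t) = c + 1 / posCF t := by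
  cases t <;> simp [posCF]

lemma negCF_cons (c : ℚ) (t : List ℚ) : negCF (c :: t) = c - 1 / negCF t := by
  cases t <;> simp [negCF]

lemma rep_cons (k : ℕ) (L : List ℚ) (d : ℚ) (hd : 0 < d) (h : negCF L = 1 + d) :
    negCF (List.replicate k 2 ++ L) = (1 + (k+1)*d)/(1 + k*d) := by
  induction k with
  | zero => simpa using h
  | succ k ih =>
    have h1 : (0:ℚ) < 1 + k*d := by positivity
    have h2 : (0:ℚ) < 1 + (k+1)*d := by positivity
    rw [List.replicate_succ, List.cons_append, negCF_cons, ih]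
    rw [one_div_div]
    push_cast
    rw [eq_div_iff h2.ne', sub_mul, div_mul_cancel₀ _ h2.ne']
    ring

def blocks (n : ℕ) (c : ℕ → ℤ) (r : ℕ) (j : ℕ) : List ℤ :=
  if j = n - 1 then
    (if (n + r) % 2 = 0 then [c j + 1] else List.replicate (c j - 1).toNat 2)
  else if (j + r) % 2 = 0 then List.replicate (c j - 1).toNat 2
  else [c j + 2]

lemma blocks_succ (n : ℕ) (hn : 1 ≤ n) (c : ℕ → ℤ) (r : ℕ) :
    (fun j => blocks (n+1) c r (j+1)) = blocks n (fun i => c (i+1)) (r+1) := by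
  funext j
  unfold blocks
  by_cases hj : j = n - 1
  · rw [if_pos (by omega : j + 1 = n + 1 - 1), if_pos hj,
      show n + 1 + r = n + (r+1) from by omega]
  · rw [if_neg (by omega : ¬ (j + 1 = n + 1 - 1)), if_neg hj,
      show j + 1 + r = j + (r+1) from by omega]

lemma key (n : ℕ) (hn : 1 ≤ n) : ∀ (c : ℕ → ℤ) (r : ℕ),
    (∀ i, i < n → 1 ≤ c i) → 2 ≤ c (n-1) →
    1 < posCF ((List.range n).map fun i => (c i : ℚ)) ∧
    negCF (((List.range n).flatMap (blocks n c r)).map (fun t : ℤ => (t : ℚ))) =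
      (if r % 2 = 0 then
        posCF ((List.range n).map fun i => (c i : ℚ)) /
          (posCF ((List.range n).map fun i => (c i : ℚ)) - 1)
      else posCF ((List.range n).map fun i => (c i : ℚ)) + 1) := by
  induction n, hn using Nat.le_induction with
  | base =>
    intro c r hall hlast
    simp only [Nat.sub_self] at hlast
    have hr1 : List.range 1 = [0] := by decide
    have hx : posCF ((List.range 1).map fun i => (c i : ℚ)) = (c 0 : ℚ) := by
      simp [hr1, posCF]
    have hc2 : (2:ℚ) ≤ (c 0 : ℚ) := by exact_mod_cast hlast
    refine ⟨by rw [hx]; linarith, ?_⟩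
    have hb : (List.range 1).flatMap (blocks 1 c r) = blocks 1 c r 0 := by
      simp [hr1]
    rw [hb, hx]
    unfold blocks
    rw [if_pos (by norm_num : (0:ℕ) = 1 - 1)]
    by_cases hr : r % 2 = 0
    · rw [if_neg (by omega : ¬ ((1 + r) % 2 = 0)), if_pos hr]
      obtain ⟨k, hk⟩ : ∃ k, (c 0 - 1).toNat = k + 1 := ⟨(c 0 - 2).toNat, by omega⟩
      have hkk : (k : ℚ) = (c 0 : ℚ) - 2 := by
        have h1 : (k : ℤ) = c 0 - 2 := by omega
        exact_mod_cast h1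
      rw [hk]
      have hrep : (List.replicate (k+1) (2:ℤ)).map (fun t : ℤ => (t:ℚ))
          = List.replicate k 2 ++ [2] := by
        rw [List.map_replicate, List.replicate_succ']
        norm_num
      rw [hrep, rep_cons k [2] 1 one_pos (by norm_num [negCF]), hkk]
      rw [div_eq_div_iff (by linarith) (by linarith)]
      ring
    · rw [if_pos (by omega : (1 + r) % 2 = 0), if_neg hr]
      simp [negCF]
  | succ n hn ih =>
    intro c r hall hlast
    have hlast' : 2 ≤ c n := by simpa using hlast
    obtain ⟨hy, hne⟩ := ih (fun i => c (i+1)) (r+1)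
      (fun i hi => hall (i+1) (by omega))
      (by simpa [Nat.sub_add_cancel hn] using hlast')
    set y := posCF ((List.range n).map fun i => ((c (i+1)) : ℚ)) with hydef
    have hx : posCF ((List.range (n+1)).map fun i => (c i : ℚ)) = (c 0 : ℚ) + 1 / y := by
      rw [List.range_succ_eq_map]
      simp only [List.map_cons, List.map_map]
      rw [posCF_cons]
      rfl
    have h0 : (1:ℚ) ≤ (c 0 : ℚ) := by exact_mod_cast hall 0 (by omega)
    have hy0 : (0:ℚ) < y := by linarith
    have hinv : (0:ℚ) < 1/y := by positivity
    have hxgt : 1 < (c 0 : ℚ) + 1/y := by linarith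
    refine ⟨by rw [hx]; exact hxgt, ?_⟩
    have hfm : (List.range (n+1)).flatMap (blocks (n+1) c r)
        = blocks (n+1) c r 0
          ++ (List.range n).flatMap (blocks n (fun i => c (i+1)) (r+1)) := by
      rw [List.range_succ_eq_map, List.flatMap_cons]
      congr 1
      rw [List.flatMap_map]
      congr 1
      exact blocks_succ n hn c r
    have hb0 : blocks (n+1) c r 0
        = if r % 2 = 0 then List.replicate (c 0 - 1).toNat 2 else [c 0 + 2] := by
      unfold blocks
      rw [if_neg (by omega : ¬ ((0:ℕ) = n + 1 - 1))]
      simp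
    rw [hfm, hx, List.map_append, hb0]
    by_cases hr : r % 2 = 0
    · rw [if_pos hr, if_pos hr]
      rw [if_neg (by omega : ¬ ((r+1) % 2 = 0))] at hne
      have hz : negCF (((List.range n).flatMap (blocks n (fun i => c (i+1)) (r+1))).map
          (fun t : ℤ => (t:ℚ))) = 1 + y := by rw [hne]; ring
      rw [List.map_replicate, show ((2:ℤ):ℚ) = 2 from by norm_num,
        rep_cons _ _ y hy0 hz]
      have hk : ((((c 0 - 1).toNat) : ℕ) : ℚ) = (c 0 : ℚ) - 1 := by
        have h1 : (((c 0 - 1).toNat : ℤ)) = c 0 - 1 := Int.toNat_of_nonneg (by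
          have : (1:ℤ) ≤ c 0 := hall 0 (by omega); omega)
        exact_mod_cast h1
      rw [hk]
      have hd1 : (0:ℚ) < 1 + ((c 0:ℚ) - 1) * y := by nlinarith
      have hx1 : (0:ℚ) < (c 0:ℚ) + 1/y - 1 := by linarith
      rw [div_eq_div_iff hd1.ne' hx1.ne']
      field_simp
      ring
    · rw [if_neg hr, if_neg hr]
      rw [if_pos (by omega : (r+1) % 2 = 0)] at hne
      rw [List.map_cons, List.map_nil, List.singleton_append, negCF_cons, hne, one_div_div]
      have hyy : (0:ℚ) < y - 1 := by linarith
      push_cast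
      field_simp
      ring

lemma map_cast (L : List ℤ) : (L.map fun t => (t : ℚ)) = L.map (fun t : ℤ => (t : ℚ)) := by
  induction L with
  | nil => rfl
  | cons a t ih => simp_all [List.flatMap_cons]


/-- If `p > q > 0` are coprime with `p/q = [c₁, …, cₙ]⁺`, then
`p/(p-q) = [2…2 (c₁-1 copies), c₂+2, 2…2 (c₃-1 copies), c₄+2, …]⁻`,
ending with `cₙ+1` if `n` is even and with `cₙ-1` copies of `2` if `n` is odd;
moreover this coefficient sequence is nonempty.
(Here the sequence is indexed by `0, …, n-1`, so the paper's `cᵢ` is `c (i-1)`.) -/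
theorem stmt2 (p q : ℤ) (hq : 0 < q) (hpq : q < p) (hcop : IsCoprime p q)
    (n : ℕ) (hn : 1 ≤ n) (c : ℕ → ℤ)
    (hc0 : 1 ≤ c 0)
    (hcmid : ∀ i, 0 < i → i < n - 1 → 1 ≤ c i)
    (hclast : 2 ≤ n → 2 ≤ c (n - 1))
    (hcf : (p : ℚ) / q = posCF ((List.range n).map fun i => (c i : ℚ))) :
    ((List.range n).flatMap fun j =>
        if j = n - 1 then
          (if n % 2 = 0 then [c j + 1] else List.replicate (c j - 1).toNat 2)
        else if j % 2 = 0 then List.replicate (c j - 1).toNat 2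
        else [c j + 2]) ≠ [] ∧
    (p : ℚ) / (p - q : ℤ) =
      negCF ((((List.range n).flatMap fun j =>
        if j = n - 1 then
          (if n % 2 = 0 then [c j + 1] else List.replicate (c j - 1).toNat 2)
        else if j % 2 = 0 then List.replicate (c j - 1).toNat 2
        else [c j + 2])).map fun t => (t : ℚ)) := by
  have hq0 : (0:ℚ) < (q:ℚ) := by exact_mod_cast hq
  have hpq' : (q:ℚ) < (p:ℚ) := by exact_mod_cast hpq
  have hx1 : 1 < (p:ℚ)/(q:ℚ) := (one_lt_div hq0).2 hpq'
  have hlast2 : 2 ≤ c (n-1) := by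
    rcases Nat.lt_or_ge n 2 with h | h
    · have hn1 : n = 1 := by omega
      subst hn1
      have hone : posCF ((List.range 1).map fun i => (c i : ℚ)) = (c 0 : ℚ) := by
        simp [show List.range 1 = [0] from by decide, posCF]
      rw [hone] at hcf
      have h1 : 1 < (c 0 : ℚ) := hcf ▸ hx1
      have h2 : (1:ℤ) < c 0 := by exact_mod_cast h1
      show 2 ≤ c 0
      omega
    · exact hclast h
  have hall : ∀ i, i < n → 1 ≤ c i := by
    intro i hi
    by_cases h0 : i = 0
    · exact h0 ▸ hc0
    · by_cases hl : i = n - 1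
      · rw [hl]; omega
      · exact hcmid i (by omega) (by omega)
  obtain ⟨hxgt, hneg⟩ := key n hn c 0 hall hlast2
  rw [if_pos (by norm_num)] at hneg
  rw [← hcf] at hxgt hneg
  have hblocks : (fun j => if j = n - 1 then
          (if n % 2 = 0 then [c j + 1] else List.replicate (c j - 1).toNat 2)
        else if j % 2 = 0 then List.replicate (c j - 1).toNat 2
        else [c j + 2]) = blocks n c 0 := by
    funext j
    unfold blocks
    simp
  rw [hblocks, map_cast]
  have hpos : (0:ℚ) < (p/q)/((p/q) - 1) := div_pos (by linarith) (by linarith)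
  constructor
  · intro h
    rw [h] at hneg
    simp only [List.map_nil] at hneg
    rw [show negCF [] = 0 from rfl] at hneg
    rw [← hneg] at hpos
    exact lt_irrefl _ hpos
  · rw [hneg]
    have h1 : ((p:ℚ) - q) ≠ 0 := by linarith
    have h2 : ((p:ℚ)/q - 1) ≠ 0 := by linarith
    push_cast
    rw [div_eq_div_iff h1 h2]
    field_simp
end

section
/- Let n ≥ 2 and let a_1, …, a_n be integers with a_1 ≥ 1, |a_i| ≥ 2 for 1 < i < n, and either |a_n| ≥ 2 or a_n = −1. Let A_n = A(a_1, …, a_n) and let A_{n−1} = A(a_1, …, a_{n−1}) be its leading principal (n−1)×(n−1) minor. Then signature(A_n) = signature(A_{n−1}) + sign(a_n). -/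
/-- The signature of a Hermitian (real symmetric) matrix: the number of positive
eigenvalues minus the number of negative eigenvalues, counted with multiplicity
(junk value `0` for non-Hermitian matrices). -/
noncomputable def matSig {n : ℕ} (A : Matrix (Fin n) (Fin n) ℝ) : ℤ :=
  if hA : A.IsHermitian then
    ((Finset.univ.filter fun i => 0 < hA.eigenvalues i).card : ℤ) -
    ((Finset.univ.filter fun i => hA.eigenvalues i < 0).card : ℤ)
  else 0

/-- The symmetric tridiagonal `n × n` real matrix with diagonal entries
`a 0, …, a (n-1)` and off-diagonal entries `1`. -/
def triMat (n : ℕ) (a : ℕ → ℤ) : Matrix (Fin n) (Fin n) ℝ :=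
  Matrix.of fun i j : Fin n =>
    if (i : ℕ) = j then (a i : ℝ)
    else if (i : ℕ) + 1 = j ∨ (j : ℕ) + 1 = i then 1 else 0

open Matrix Finset

lemma core_le {m : ℕ} (μ ν : Fin m → ℝ)
    (B C : (Fin m → ℝ) →ₗ[ℝ] (Fin m → ℝ))
    (hB : Function.Injective B) (hC : Function.Injective C)
    (h : ∀ x, ∑ i, μ i * (B x i)^2 = ∑ i, ν i * (C x i)^2) :
    (Finset.univ.filter fun i => 0 < μ i).card ≤
      (Finset.univ.filter fun i => 0 < ν i).card := by
  by_contra hlt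
  push_neg at hlt
  set N : Finset (Fin m) := Finset.univ.filter (fun i => ¬ 0 < μ i) with hN
  set P : Finset (Fin m) := Finset.univ.filter (fun i => 0 < ν i) with hP
  have hcard : (Finset.univ.filter fun i => 0 < μ i).card + N.card = m := by
    rw [hN]
    have := Finset.card_filter_add_card_filter_not (s := (Finset.univ : Finset (Fin m)))
      (p := fun i => 0 < μ i)
    simpa using this
  have hdim : N.card + P.card < m := by omega
  let ψ : (Fin m → ℝ) →ₗ[ℝ] ((↥N ⊕ ↥P) → ℝ) :=
    { toFun := fun x => Sum.elim (fun i => B x i.1) (fun j => C x j.1)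
      map_add' := by intro x y; funext s; rcases s with i | j <;> simp
      map_smul' := by intro c x; funext s; rcases s with i | j <;> simp }
  have hψ : ¬ Function.Injective ψ := by
    intro hinj
    have := LinearMap.finrank_le_finrank_of_injective hinj
    rw [Module.finrank_pi, Module.finrank_pi] at this
    simp [Fintype.card_sum] at this
    omega
  rw [Function.not_injective_iff] at hψ
  obtain ⟨x, y, hxy, hne⟩ := hψ
  set z := x - y with hz
  have hz0 : z ≠ 0 := sub_ne_zero.mpr hne
  have hψz : ψ z = 0 := by rw [hz, map_sub, hxy, sub_self]
  have hBz : ∀ i : Fin m, ¬ 0 < μ i → B z i = 0 := by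
    intro i hi
    have := congrFun hψz (Sum.inl ⟨i, by
      simp only [hN, Finset.mem_filter, Finset.mem_univ, true_and]; exact hi⟩)
    simpa [ψ] using this
  have hCz : ∀ j : Fin m, 0 < ν j → C z j = 0 := by
    intro j hj
    have := congrFun hψz (Sum.inr ⟨j, by
      simp only [hP, Finset.mem_filter, Finset.mem_univ, true_and]; exact hj⟩)
    simpa [ψ] using this
  have hpos : 0 < ∑ i, μ i * (B z i)^2 := by
    apply Finset.sum_pos'
    · intro i _
      by_cases hi : 0 < μ i
      · positivity
      · rw [hBz i hi]; simp
    · have hBzne : B z ≠ 0 := fun h0 => hz0 (by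
        have := hB (a₁ := z) (a₂ := 0); rw [map_zero] at this; exact this h0)
      obtain ⟨i, hi⟩ := Function.ne_iff.mp hBzne
      refine ⟨i, Finset.mem_univ i, ?_⟩
      have hi' : B z i ≠ 0 := by simpa using hi
      by_cases hμ : 0 < μ i
      · have h2 : (0:ℝ) < (B z i)^2 := by
          have := sq_abs (B z i)
          have habs : 0 < |B z i| := abs_pos.mpr hi'
          nlinarith
        exact mul_pos hμ h2
      · exact absurd (hBz i hμ) hi'
  have hneg : ∑ i, ν i * (C z i)^2 ≤ 0 := by
    apply Finset.sum_nonpos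
    intro j _
    by_cases hj : 0 < ν j
    · rw [hCz j hj]; simp
    · push_neg at hj
      have : (0:ℝ) ≤ (C z j)^2 := sq_nonneg _
      nlinarith
  have := h z
  linarith

lemma core_eq {m : ℕ} (μ ν : Fin m → ℝ)
    (B C : (Fin m → ℝ) →ₗ[ℝ] (Fin m → ℝ))
    (hB : Function.Injective B) (hC : Function.Injective C)
    (h : ∀ x, ∑ i, μ i * (B x i)^2 = ∑ i, ν i * (C x i)^2) :
    (Finset.univ.filter fun i => 0 < μ i).card =
      (Finset.univ.filter fun i => 0 < ν i).card :=
  le_antisymm (core_le μ ν B C hB hC h) (core_le ν μ C B hC hB (fun x => (h x).symm))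

lemma matSig_eq_counts {m : ℕ} {A : Matrix (Fin m) (Fin m) ℝ} (hA : A.IsHermitian)
    (q : Fin m → ℝ) (L : (Fin m → ℝ) →ₗ[ℝ] (Fin m → ℝ)) (hL : Function.Injective L)
    (hrep : ∀ x, x ⬝ᵥ A.mulVec x = ∑ i, q i * (L x i)^2) :
    matSig A = ((Finset.univ.filter fun i => 0 < q i).card : ℤ) -
      ((Finset.univ.filter fun i => q i < 0).card : ℤ) := by
  -- eigen representation
  set U : Matrix (Fin m) (Fin m) ℝ := (hA.eigenvectorUnitary : Matrix (Fin m) (Fin m) ℝ) with hU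
  have hUU : U * star U = 1 := (Matrix.mem_unitaryGroup_iff).mp hA.eigenvectorUnitary.2
  have hUU' : star U * U = 1 := (Matrix.mem_unitaryGroup_iff').mp hA.eigenvectorUnitary.2
  let E : (Fin m → ℝ) →ₗ[ℝ] (Fin m → ℝ) := (star U).mulVecLin
  have hE : Function.Injective E := by
    intro v w hvw
    have : U *ᵥ ((star U) *ᵥ v) = U *ᵥ ((star U) *ᵥ w) := by
      simpa [E, Matrix.mulVecLin_apply] using congrArg (U.mulVec) hvw
    rwa [Matrix.mulVec_mulVec, Matrix.mulVec_mulVec, hUU, Matrix.one_mulVec,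
      Matrix.one_mulVec] at this
  have hrepE : ∀ x, x ⬝ᵥ A.mulVec x = ∑ i, hA.eigenvalues i * (E x i)^2 := by
    intro x
    conv_lhs => rw [hA.spectral_theorem]
    rw [Unitary.conjStarAlgAut_apply]
    rw [← Matrix.mulVec_mulVec, ← Matrix.mulVec_mulVec]
    rw [Matrix.dotProduct_mulVec x U, ← Matrix.mulVec_transpose]
    have hT : Uᵀ = star U := by
      rw [Matrix.star_eq_conjTranspose, Matrix.conjTranspose]
      ext i j
      simp only [Matrix.transpose_apply, Matrix.map_apply, star_trivial]
    rw [hT]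
    simp only [Matrix.mulVec_diagonal, E, Matrix.mulVecLin_apply, dotProduct]
    apply Finset.sum_congr rfl
    intro i _
    simp [RCLike.ofReal]
    ring
  have hposc := core_eq hA.eigenvalues q E L hE hL (fun x => by rw [← hrepE x, hrep x])
  have hnegc := core_eq (fun i => -hA.eigenvalues i) (fun i => -q i) E L hE hL (fun x => by
    have h1 := hrepE x
    have h2 := hrep x
    have : -∑ i, hA.eigenvalues i * (E x i)^2 = -∑ i, q i * (L x i)^2 := by rw [← h1, ← h2]
    rw [← Finset.sum_neg_distrib, ← Finset.sum_neg_distrib] at this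
    simpa [neg_mul] using this)
  have hfilt1 : (Finset.univ.filter fun i => 0 < -hA.eigenvalues i) =
      (Finset.univ.filter fun i => hA.eigenvalues i < 0) := by
    apply Finset.filter_congr; intro i _; simp [neg_pos]
  have hfilt2 : (Finset.univ.filter fun i => 0 < -q i) =
      (Finset.univ.filter fun i => q i < 0) := by
    apply Finset.filter_congr; intro i _; simp [neg_pos]
  rw [matSig, dif_pos hA]
  rw [hposc]
  rw [hfilt1, hfilt2] at hnegc
  rw [hnegc]



def dd (a : ℕ → ℤ) : ℕ → ℤ
  | 0 => 1
  | 1 => a 0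
  | (k+2) => a (k+1) * dd a (k+1) - dd a k

lemma tri_herm (m : ℕ) (a : ℕ → ℤ) : (triMat m a).IsHermitian := by
  rw [Matrix.IsHermitian]
  ext i j
  rw [Matrix.conjTranspose_apply, star_trivial]
  by_cases h : (i : ℕ) = (j : ℕ)
  · have : i = j := Fin.ext h
    subst this; rfl
  · have h' : ¬ (j : ℕ) = (i : ℕ) := fun hc => h hc.symm
    simp only [triMat, of_apply, if_neg h, if_neg h']
    exact if_congr or_comm rfl rfl

lemma sum_single_nat {m : ℕ} (x : Fin m → ℝ) (t : ℕ) :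
    (∑ j : Fin m, if t = (j : ℕ) then x j else 0) =
      if h : t < m then x ⟨t, h⟩ else 0 := by
  by_cases h : t < m
  · rw [dif_pos h, Finset.sum_eq_single (⟨t, h⟩ : Fin m)]
    · simp
    · intro j _ hne
      rw [if_neg]
      intro hc
      exact hne (Fin.ext hc.symm)
    · intro habs; exact absurd (Finset.mem_univ _) habs
  · rw [dif_neg h]
    apply Finset.sum_eq_zero
    intro j _
    rw [if_neg]
    intro hc
    have := j.isLt
    omega

lemma mulVec_tri (m : ℕ) (a : ℕ → ℤ) (x : Fin m → ℝ) (i : Fin m) :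
    (triMat m a).mulVec x i =
      (a i : ℝ) * x i + ((if h : (i : ℕ) + 1 < m then x ⟨(i : ℕ) + 1, h⟩ else 0)
        + (if h : 1 ≤ (i : ℕ) then x ⟨(i : ℕ) - 1, by omega⟩ else 0)) := by
  have hsplit : ∀ j : Fin m, triMat m a i j * x j =
      (if (i : ℕ) = (j : ℕ) then (a i : ℝ) * x j else 0)
      + ((if (i : ℕ) + 1 = (j : ℕ) then x j else 0)
      + (if (j : ℕ) + 1 = (i : ℕ) then x j else 0)) := by
    intro j
    simp only [triMat, of_apply]
    by_cases h1 : (i : ℕ) = (j : ℕ)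
    · have h2 : ¬ ((i : ℕ) + 1 = (j : ℕ)) := by omega
      have h3 : ¬ ((j : ℕ) + 1 = (i : ℕ)) := by omega
      rw [if_pos h1, if_pos h1, if_neg h2, if_neg h3]; ring
    · rw [if_neg h1, if_neg h1]
      by_cases h2 : (i : ℕ) + 1 = (j : ℕ)
      · have h3 : ¬ ((j : ℕ) + 1 = (i : ℕ)) := by omega
        rw [if_pos (Or.inl h2), if_pos h2, if_neg h3]; ring
      · by_cases h3 : (j : ℕ) + 1 = (i : ℕ)
        · rw [if_pos (Or.inr h3), if_neg h2, if_pos h3]; ring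
        · rw [if_neg (by tauto), if_neg h2, if_neg h3]; ring
  rw [Matrix.mulVec, dotProduct, Finset.sum_congr rfl (fun j _ => hsplit j),
    Finset.sum_add_distrib, Finset.sum_add_distrib]
  congr 1
  · rw [Finset.sum_eq_single i]
    · rw [if_pos rfl]
    · intro j _ hne
      rw [if_neg (fun hc => hne (Fin.ext hc.symm))]
    · intro habs; exact absurd (Finset.mem_univ _) habs
  congr 1
  · exact sum_single_nat x ((i : ℕ) + 1)
  · by_cases hi : 1 ≤ (i : ℕ)
    · have hcong : ∀ j : Fin m, (if (j : ℕ) + 1 = (i : ℕ) then x j else 0)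
          = (if (i : ℕ) - 1 = (j : ℕ) then x j else 0) := by
        intro j
        exact if_congr (by constructor <;> omega) rfl rfl
      rw [Finset.sum_congr rfl (fun j _ => hcong j), sum_single_nat]
      rw [dif_pos (by omega : (i : ℕ) - 1 < m), dif_pos hi]
    · rw [dif_neg hi]
      apply Finset.sum_eq_zero
      intro j _
      rw [if_neg (by omega)]

lemma range_identity (m : ℕ) (X An qn cn : ℕ → ℝ)
    (hq0 : 1 ≤ m → qn 0 = An 0)
    (hqc : ∀ k, k < m → qn k * cn k = 1)
    (hstep : ∀ k, k + 1 < m → An (k + 1) - qn (k + 1) = cn k) :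
    ∑ k ∈ Finset.range m, X k * (An k * X k + ((if k + 1 < m then X (k + 1) else 0)
        + (if 1 ≤ k then X (k - 1) else 0)))
      = ∑ k ∈ Finset.range m, qn k * (X k + cn k * (if k + 1 < m then X (k + 1) else 0))^2 := by
  obtain rfl | ⟨M, rfl⟩ : m = 0 ∨ ∃ M, m = M + 1 := by
    cases m with
    | zero => exact Or.inl rfl
    | succ M => exact Or.inr ⟨M, rfl⟩
  · simp
  set S : ℕ → ℝ := fun k => if k + 1 < M + 1 then X (k + 1) else 0 with hS
  set P : ℕ → ℝ := fun k => if 1 ≤ k then X (k - 1) else 0 with hP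
  have hLHS : ∑ k ∈ Finset.range (M + 1), X k * (An k * X k + (S k + P k))
      = (∑ k ∈ Finset.range (M + 1), An k * X k ^ 2)
        + ((∑ k ∈ Finset.range (M + 1), X k * S k)
        + (∑ k ∈ Finset.range (M + 1), X k * P k)) := by
    rw [← Finset.sum_add_distrib, ← Finset.sum_add_distrib]
    exact Finset.sum_congr rfl (fun k _ => by ring)
  have hRHS : ∑ k ∈ Finset.range (M + 1), qn k * (X k + cn k * S k)^2
      = (∑ k ∈ Finset.range (M + 1), qn k * X k ^ 2)
        + (2 * (∑ k ∈ Finset.range (M + 1), X k * S k)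
        + (∑ k ∈ Finset.range (M + 1), cn k * S k ^ 2)) := by
    rw [Finset.mul_sum, ← Finset.sum_add_distrib, ← Finset.sum_add_distrib]
    apply Finset.sum_congr rfl
    intro k hk
    have h1 : qn k * cn k = 1 := hqc k (Finset.mem_range.mp hk)
    have expand : qn k * (X k + cn k * S k)^2
        = qn k * X k ^ 2 + 2 * (qn k * cn k) * (X k * S k)
          + (qn k * cn k) * (cn k * S k ^ 2) := by ring
    rw [expand, h1]; ring
  have hC1 : ∑ k ∈ Finset.range (M + 1), X k * P k
      = ∑ k ∈ Finset.range (M + 1), X k * S k := by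
    rw [Finset.sum_range_succ' (fun k => X k * P k) M, Finset.sum_range_succ]
    have e1 : X M * S M = 0 := by
      have : S M = 0 := by rw [hS]; simp
      rw [this, mul_zero]
    have e2 : X 0 * P 0 = 0 := by
      have : P 0 = 0 := by rw [hP]; simp
      rw [this, mul_zero]
    rw [e1, e2, add_zero, add_zero]
    apply Finset.sum_congr rfl
    intro k hk
    have hk' := Finset.mem_range.mp hk
    have hPk : P (k + 1) = X k := by rw [hP]; simp
    have hSk : S k = X (k + 1) := if_pos (by omega)
    rw [hPk, hSk]; ring
  have hC2 : (∑ k ∈ Finset.range (M + 1), cn k * S k ^ 2)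
      + (∑ k ∈ Finset.range (M + 1), qn k * X k ^ 2)
      = ∑ k ∈ Finset.range (M + 1), An k * X k ^ 2 := by
    rw [Finset.sum_range_succ (fun k => cn k * S k ^ 2) M,
      Finset.sum_range_succ' (fun k => qn k * X k ^ 2) M,
      Finset.sum_range_succ' (fun k => An k * X k ^ 2) M]
    have e1 : cn M * S M ^ 2 = 0 := by
      have : S M = 0 := by rw [hS]; simp
      rw [this]; ring
    have e2 : qn 0 * X 0 ^ 2 = An 0 * X 0 ^ 2 := by rw [hq0 (by omega)]
    rw [e1, add_zero, e2]
    have e3 : ∀ k ∈ Finset.range M, cn k * S k ^ 2 + qn (k + 1) * X (k + 1) ^ 2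
        = An (k + 1) * X (k + 1) ^ 2 := by
      intro k hk
      have hk' := Finset.mem_range.mp hk
      have hSk : S k = X (k + 1) := if_pos (by omega)
      have := hstep k (by omega)
      rw [hSk]; nlinarith [this]
    calc (∑ k ∈ Finset.range M, cn k * S k ^ 2)
          + ((∑ k ∈ Finset.range M, qn (k + 1) * X (k + 1) ^ 2) + An 0 * X 0 ^ 2)
        = (∑ k ∈ Finset.range M, (cn k * S k ^ 2 + qn (k + 1) * X (k + 1) ^ 2))
          + An 0 * X 0 ^ 2 := by rw [Finset.sum_add_distrib]; ring
      _ = (∑ k ∈ Finset.range M, An (k + 1) * X (k + 1) ^ 2) + An 0 * X 0 ^ 2 := by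
          rw [Finset.sum_congr rfl e3]
  rw [hLHS, hRHS, hC1]
  linarith [hC2]

noncomputable def Lmap (m : ℕ) (c : ℕ → ℝ) : (Fin m → ℝ) →ₗ[ℝ] (Fin m → ℝ) where
  toFun := fun x i => x i + c i * (if h : (i : ℕ) + 1 < m then x ⟨(i : ℕ) + 1, h⟩ else 0)
  map_add' := by
    intro x y; funext i
    by_cases h : (i : ℕ) + 1 < m
    · simp only [dif_pos h, Pi.add_apply]; ring
    · simp only [dif_neg h, Pi.add_apply]; ring
  map_smul' := by
    intro r x; funext i
    by_cases h : (i : ℕ) + 1 < m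
    · simp only [dif_pos h, Pi.smul_apply, smul_eq_mul, RingHom.id_apply]; ring
    · simp only [dif_neg h, Pi.smul_apply, smul_eq_mul, RingHom.id_apply]; ring

lemma Lmap_inj (m : ℕ) (c : ℕ → ℝ) : Function.Injective (Lmap m c) := by
  have hker : ∀ x, Lmap m c x = 0 → x = 0 := by
    intro x hx
    have key : ∀ k : ℕ, ∀ i : Fin m, m ≤ (i : ℕ) + 1 + k → x i = 0 := by
      intro k
      induction k with
      | zero =>
        intro i hi
        have h0 : x i + c i * (if h : (i : ℕ) + 1 < m then x ⟨(i : ℕ) + 1, h⟩ else 0) = 0 :=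
          congrFun hx i
        rw [dif_neg (by omega)] at h0
        simpa using h0
      | succ k ih =>
        intro i hi
        have h0 : x i + c i * (if h : (i : ℕ) + 1 < m then x ⟨(i : ℕ) + 1, h⟩ else 0) = 0 :=
          congrFun hx i
        by_cases h : (i : ℕ) + 1 < m
        · have hz : x ⟨(i : ℕ) + 1, h⟩ = 0 := ih ⟨(i : ℕ) + 1, h⟩ (by simp; omega)
          rw [dif_pos h, hz] at h0
          simpa using h0
        · rw [dif_neg h] at h0
          simpa using h0
    funext i
    simpa using key m i (by have := i.isLt; omega)
  intro x y hxy
  have := hker (x - y) (by rw [map_sub, hxy, sub_self])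
  exact sub_eq_zero.mp this

lemma div_pos_iff_int (A B : ℤ) : (0 : ℝ) < (A : ℝ) / (B : ℝ) ↔ 0 < A * B := by
  rw [div_pos_iff, mul_pos_iff]
  constructor
  · rintro (⟨h1, h2⟩ | ⟨h1, h2⟩)
    · exact Or.inl ⟨by exact_mod_cast h1, by exact_mod_cast h2⟩
    · exact Or.inr ⟨by exact_mod_cast h1, by exact_mod_cast h2⟩
  · rintro (⟨h1, h2⟩ | ⟨h1, h2⟩)
    · exact Or.inl ⟨by exact_mod_cast h1, by exact_mod_cast h2⟩
    · exact Or.inr ⟨by exact_mod_cast h1, by exact_mod_cast h2⟩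

lemma tri_rep (m : ℕ) (a : ℕ → ℤ) (hd : ∀ k, k ≤ m → dd a k ≠ 0) (x : Fin m → ℝ) :
    x ⬝ᵥ (triMat m a).mulVec x
      = ∑ i : Fin m, ((dd a ((i : ℕ) + 1) : ℝ) / (dd a (i : ℕ) : ℝ))
          * ((Lmap m (fun k => (dd a k : ℝ) / (dd a (k + 1) : ℝ))) x i)^2 := by
  set X : ℕ → ℝ := fun k => if h : k < m then x ⟨k, h⟩ else 0 with hX
  have hXi : ∀ i : Fin m, X (i : ℕ) = x i := by
    intro i
    have : X (i : ℕ) = x ⟨(i : ℕ), i.isLt⟩ := dif_pos i.isLt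
    simpa using this
  set qn : ℕ → ℝ := fun k => (dd a (k + 1) : ℝ) / (dd a k : ℝ) with hqn
  set cn : ℕ → ℝ := fun k => (dd a k : ℝ) / (dd a (k + 1) : ℝ) with hcn
  have lhs_eq : x ⬝ᵥ (triMat m a).mulVec x
      = ∑ k ∈ Finset.range m, X k * ((a k : ℝ) * X k + ((if k + 1 < m then X (k + 1) else 0)
          + (if 1 ≤ k then X (k - 1) else 0))) := by
    rw [← Fin.sum_univ_eq_sum_range]
    rw [dotProduct]
    apply Finset.sum_congr rfl
    intro i _
    rw [mulVec_tri, hXi]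
    have e1 : (if h : (i : ℕ) + 1 < m then x ⟨(i : ℕ) + 1, h⟩ else 0)
        = (if (i : ℕ) + 1 < m then X ((i : ℕ) + 1) else 0) := by
      by_cases h : (i : ℕ) + 1 < m
      · rw [dif_pos h, if_pos h]
        simp only [hX]
        rw [dif_pos h]
      · rw [dif_neg h, if_neg h]
    have e2 : (if h : 1 ≤ (i : ℕ) then x ⟨(i : ℕ) - 1, by omega⟩ else 0)
        = (if 1 ≤ (i : ℕ) then X ((i : ℕ) - 1) else 0) := by
      by_cases h : 1 ≤ (i : ℕ)
      · rw [dif_pos h, if_pos h]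
        simp only [hX]
        rw [dif_pos (by omega : (i : ℕ) - 1 < m)]
      · rw [dif_neg h, if_neg h]
    rw [e1, e2]
  have rhs_eq : (∑ i : Fin m, qn (i : ℕ) * ((Lmap m cn) x i)^2)
      = ∑ k ∈ Finset.range m, qn k * (X k + cn k * (if k + 1 < m then X (k + 1) else 0))^2 := by
    rw [← Fin.sum_univ_eq_sum_range]
    apply Finset.sum_congr rfl
    intro i _
    congr 1
    have hL : (Lmap m cn) x i
        = x i + cn (i : ℕ) * (if h : (i : ℕ) + 1 < m then x ⟨(i : ℕ) + 1, h⟩ else 0) := rfl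
    rw [hL, hXi]
    have e1 : (if h : (i : ℕ) + 1 < m then x ⟨(i : ℕ) + 1, h⟩ else 0)
        = (if (i : ℕ) + 1 < m then X ((i : ℕ) + 1) else 0) := by
      by_cases h : (i : ℕ) + 1 < m
      · rw [dif_pos h, if_pos h]
        simp only [hX]
        rw [dif_pos h]
      · rw [dif_neg h, if_neg h]
    rw [e1]
  rw [lhs_eq, rhs_eq]
  apply range_identity m X (fun k => (a k : ℝ)) qn cn
  · intro _
    have h0 : dd a 0 = 1 := rfl
    have h1 : dd a 1 = a 0 := rfl
    rw [hqn]
    simp [h0, h1]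
  · intro k hk
    have h1 : (dd a k : ℝ) ≠ 0 := Int.cast_ne_zero.mpr (hd k (by omega))
    have h2 : (dd a (k + 1) : ℝ) ≠ 0 := Int.cast_ne_zero.mpr (hd (k + 1) (by omega))
    rw [hqn, hcn]
    field_simp
  · intro k hk
    have h1 : (dd a (k + 1) : ℝ) ≠ 0 := Int.cast_ne_zero.mpr (hd (k + 1) (by omega))
    have hrec : (dd a (k + 2) : ℝ) = (a (k + 1) : ℝ) * (dd a (k + 1) : ℝ) - (dd a k : ℝ) := by
      have : dd a (k + 2) = a (k + 1) * dd a (k + 1) - dd a k := rfl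
      rw [this]; push_cast; ring
    rw [hqn, hcn]
    field_simp
    linarith [hrec]



lemma counts_to_sum {m : ℕ} (q : Fin m → ℝ) (hq : ∀ i, q i ≠ 0) :
    ((Finset.univ.filter fun i => 0 < q i).card : ℤ)
      - ((Finset.univ.filter fun i => q i < 0).card : ℤ)
      = ∑ i : Fin m, (if 0 < q i then (1 : ℤ) else -1) := by
  have hsplit := Finset.sum_filter_add_sum_filter_not Finset.univ (fun i => 0 < q i)
    (fun i => if 0 < q i then (1 : ℤ) else -1)
  have h1 : ∑ i ∈ Finset.univ.filter (fun i => 0 < q i), (if 0 < q i then (1 : ℤ) else -1)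
      = ((Finset.univ.filter fun i => 0 < q i).card : ℤ) := by
    rw [Finset.sum_congr rfl (fun i hi => if_pos (Finset.mem_filter.mp hi).2),
      Finset.sum_const]
    simp
  have h2 : ∑ i ∈ Finset.univ.filter (fun i => ¬ 0 < q i), (if 0 < q i then (1 : ℤ) else -1)
      = -((Finset.univ.filter fun i => q i < 0).card : ℤ) := by
    have hf : Finset.univ.filter (fun i => ¬ 0 < q i)
        = Finset.univ.filter (fun i => q i < 0) := by
      apply Finset.filter_congr
      intro i _
      constructor
      · intro h; exact lt_of_le_of_ne (not_lt.mp h) (hq i)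
      · intro h; exact not_lt.mpr (le_of_lt h)
    rw [hf, Finset.sum_congr rfl (fun i hi => if_neg (by
        have := (Finset.mem_filter.mp hi).2
        exact not_lt.mpr (le_of_lt this))),
      Finset.sum_const]
    simp
  rw [← hsplit, h1, h2]
  ring

lemma matSig_tri (m : ℕ) (a : ℕ → ℤ) (hd : ∀ k, k ≤ m → dd a k ≠ 0) :
    matSig (triMat m a)
      = ∑ k ∈ Finset.range m, (if 0 < dd a (k + 1) * dd a k then (1 : ℤ) else -1) := by
  have hrep := tri_rep m a hd
  rw [matSig_eq_counts (tri_herm m a)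
    (fun i => (dd a ((i : ℕ) + 1) : ℝ) / (dd a (i : ℕ) : ℝ))
    (Lmap m (fun k => (dd a k : ℝ) / (dd a (k + 1) : ℝ)))
    (Lmap_inj m _) hrep]
  rw [counts_to_sum _ (fun i => by
    have h1 : (dd a ((i : ℕ) + 1) : ℝ) ≠ 0 :=
      Int.cast_ne_zero.mpr (hd ((i : ℕ) + 1) (by have := i.isLt; omega))
    have h2 : (dd a (i : ℕ) : ℝ) ≠ 0 :=
      Int.cast_ne_zero.mpr (hd (i : ℕ) (by have := i.isLt; omega))
    exact div_ne_zero h1 h2)]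
  rw [← Fin.sum_univ_eq_sum_range
    (fun k => if 0 < dd a (k + 1) * dd a k then (1 : ℤ) else -1) m]
  apply Finset.sum_congr rfl
  intro i _
  exact if_congr (div_pos_iff_int _ _) rfl rfl

lemma step_int (A d0 d1 : ℤ) (h0 : 1 ≤ |d0|) (h1 : |d0| ≤ |d1|)
    (h2 : |d0| < |d1| ∨ d0 = d1) (hA : 2 ≤ |A|) :
    1 ≤ |d1| ∧ |d1| ≤ |A * d1 - d0| ∧ (|d1| < |A * d1 - d0| ∨ d1 = A * d1 - d0) := by
  have k1 : 1 ≤ |d1| := le_trans h0 h1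
  have key : |A * d1| - |d0| ≤ |A * d1 - d0| := abs_sub_abs_le_abs_sub _ _
  have hAd : |A * d1| = |A| * |d1| := abs_mul _ _
  rcases h2 with hlt | heq
  · have hstrict : |d1| < |A * d1 - d0| := by nlinarith
    exact ⟨k1, le_of_lt hstrict, Or.inl hstrict⟩
  · by_cases hA2 : A = 2
    · have hval : A * d1 - d0 = d1 := by rw [hA2, ← heq]; omega
      rw [hval]
      exact ⟨k1, le_refl _, Or.inr rfl⟩
    · have h' : A ≥ 2 ∨ A ≤ -2 := by
        rcases le_or_gt 0 A with h | h
        · left; rwa [abs_of_nonneg h] at hA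
        · right; rw [abs_of_neg h] at hA; omega
      have hA1 : 2 ≤ |A - 1| := by
        rcases h' with h | h
        · rw [abs_of_nonneg (by omega)]; omega
        · rw [abs_of_nonpos (by omega)]; omega
      have hval : A * d1 - d0 = (A - 1) * d1 := by rw [← heq]; ring
      have habs : |A * d1 - d0| = |A - 1| * |d1| := by rw [hval, abs_mul]
      have hstrict : |d1| < |A * d1 - d0| := by nlinarith
      exact ⟨k1, le_of_lt hstrict, Or.inl hstrict⟩

lemma last_int (A d0 d1 : ℤ) (h0 : 1 ≤ |d0|) (h1 : |d0| ≤ |d1|)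
    (h2 : |d0| < |d1| ∨ d0 = d1) (hA : 2 ≤ |A| ∨ A = -1) :
    (A * d1 - d0) * d1 ≠ 0 ∧ (0 < (A * d1 - d0) * d1 ↔ 0 < A) := by
  have k1 : 1 ≤ |d1| := le_trans h0 h1
  have e2 : |d1| * |d1| = d1 * d1 := abs_mul_abs_self _
  have e3 : |d0 * d1| = |d0| * |d1| := abs_mul _ _
  have e4 : d0 * d1 ≤ |d0 * d1| := le_abs_self _
  have e5 : -(|d0 * d1|) ≤ d0 * d1 := neg_abs_le _
  rcases hA with hA | hA
  · have h' : A ≥ 2 ∨ A ≤ -2 := by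
      rcases le_or_gt 0 A with h | h
      · left; rwa [abs_of_nonneg h] at hA
      · right; rw [abs_of_neg h] at hA; omega
    rcases h' with h | h
    · have hpos : 0 < (A * d1 - d0) * d1 := by nlinarith
      exact ⟨ne_of_gt hpos, iff_of_true hpos (by omega)⟩
    · have hneg : (A * d1 - d0) * d1 < 0 := by nlinarith
      exact ⟨ne_of_lt hneg, iff_of_false (by omega) (by omega)⟩
  · subst hA
    rcases h2 with hlt | heq
    · have hneg : ((-1) * d1 - d0) * d1 < 0 := by nlinarith
      exact ⟨ne_of_lt hneg, iff_of_false (by omega) (by omega)⟩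
    · have hneg : ((-1) * d1 - d0) * d1 < 0 := by
        rw [← heq]
        have hdd : 1 ≤ d0 * d0 := by nlinarith [abs_mul_abs_self d0, h0]
        nlinarith
      exact ⟨ne_of_lt hneg, iff_of_false (by omega) (by omega)⟩

lemma grow (n : ℕ) (a : ℕ → ℤ) (h1 : 1 ≤ a 0)
    (hmid : ∀ i, 0 < i → i < n - 1 → 2 ≤ |a i|) :
    ∀ k, k + 1 ≤ n - 1 →
      1 ≤ |dd a k| ∧ |dd a k| ≤ |dd a (k + 1)|
        ∧ (|dd a k| < |dd a (k + 1)| ∨ dd a k = dd a (k + 1)) := by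
  intro k
  induction k with
  | zero =>
    intro _
    have e0 : dd a 0 = 1 := rfl
    have e1 : dd a 1 = a 0 := rfl
    refine ⟨by rw [e0]; simp, ?_, ?_⟩
    · rw [e0, e1]
      simpa using le_trans h1 (le_abs_self _)
    · rw [e0, e1]
      rcases lt_or_eq_of_le h1 with h | h
      · left
        simpa using lt_of_lt_of_le h (le_abs_self _)
      · right; simp [← h]
  | succ k ih =>
    intro hk1
    obtain ⟨ha, hb, hc⟩ := ih (by omega)
    have hA : 2 ≤ |a (k + 1)| := hmid (k + 1) (by omega) (by omega)
    have hrec : dd a (k + 2) = a (k + 1) * dd a (k + 1) - dd a k := rfl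
    have := step_int (a (k + 1)) (dd a k) (dd a (k + 1)) ha hb hc hA
    rw [hrec]
    exact ⟨le_trans ha hb, this.2.1, this.2.2⟩

/-- If `n ≥ 2`, `a₁ ≥ 1`, `|aᵢ| ≥ 2` for `1 < i < n`, and either `|aₙ| ≥ 2` or
`aₙ = -1`, then `signature(Aₙ) = signature(Aₙ₋₁) + sign(aₙ)`, where
`Aₖ = A(a₁, …, aₖ)` is the leading principal `k × k` tridiagonal matrix.
(Here the sequence is indexed by `0, …, n-1`, so the paper's `aᵢ` is `a (i-1)`.) -/
theorem stmt5 (n : ℕ) (hn : 2 ≤ n) (a : ℕ → ℤ)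
    (h1 : 1 ≤ a 0)
    (hmid : ∀ i, 0 < i → i < n - 1 → 2 ≤ |a i|)
    (hlast : 2 ≤ |a (n - 1)| ∨ a (n - 1) = -1) :
    matSig (triMat n a) = matSig (triMat (n - 1) a) + Int.sign (a (n - 1)) := by
  obtain ⟨k, rfl⟩ : ∃ k, n = k + 2 := ⟨n - 2, by omega⟩
  have hn1 : k + 2 - 1 = k + 1 := by omega
  rw [hn1] at hlast ⊢
  have habs : ∀ j, j ≤ k + 1 → 1 ≤ |dd a j| := by
    intro j hj
    cases j with
    | zero => simp [dd]
    | succ jj =>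
      have := grow (k + 2) a h1 hmid jj (by omega)
      exact le_trans this.1 this.2.1
  obtain ⟨ha, hb, hc⟩ := grow (k + 2) a h1 hmid k (by omega)
  have hrec : dd a (k + 2) = a (k + 1) * dd a (k + 1) - dd a k := rfl
  have hl := last_int (a (k + 1)) (dd a k) (dd a (k + 1)) ha hb hc hlast
  rw [← hrec] at hl
  have hdn : ∀ j, j ≤ k + 2 → dd a j ≠ 0 := by
    intro j hj
    rcases Nat.lt_or_ge j (k + 2) with h | h
    · intro hz
      have := habs j (by omega)
      rw [hz] at this
      simp at this
    · have : j = k + 2 := by omega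
      subst this
      exact left_ne_zero_of_mul hl.1
  have hdm : ∀ j, j ≤ k + 1 → dd a j ≠ 0 := fun j hj => hdn j (by omega)
  rw [matSig_tri (k + 2) a hdn, matSig_tri (k + 1) a hdm, Finset.sum_range_succ]
  congr 1
  have hiff := hl.2
  rcases hlast with h2 | h2
  · by_cases hpos : 0 < a (k + 1)
    · rw [if_pos (hiff.mpr hpos), Int.sign_eq_one_of_pos hpos]
    · have hne : a (k + 1) ≠ 0 := by
        intro hz; rw [hz] at h2; simp at h2
      have hneg : a (k + 1) < 0 := by omega
      rw [if_neg (fun hc => hpos (hiff.mp hc)), Int.sign_eq_neg_one_of_neg hneg]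
  · have hneg : a (k + 1) < 0 := by omega
    rw [if_neg (fun hc => absurd (hiff.mp hc) (by omega)),
      Int.sign_eq_neg_one_of_neg hneg]
end
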